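/- Let M be a connected matroid on a finite ground set E with |E| ≥ 2, let T_M = Σ_{i,j} t_{i,j} x^i y^j ∈ ℤ[x,y] be its Tutte polynomial, let R be a nontrivial unique factorization domain, and let φ : ℤ → R be the canonical ring homomorphism. If φ(t_{1,0}) ≠ 0 (i.e. the characteristic of R does not divide t_{1,0}), then the image of T_M in R[x,y] (obtained by applying φ to the coefficients) is irreducible in R[x,y]. -/

import Mathlib

/-- A circuit of a matroid: a minimal dependent set. -/
def Matroid.IsCircuit' {α : Type*} (M : Matroid α) (C : Set α) : Prop :=
  M.Dep C ∧ ∀ D : Set α, M.Dep D → D ⊆ C → D = C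

/-- A matroid is connected if its ground set is nonempty and any two distinct elements of
the ground set lie in a common circuit. -/
def Matroid.IsConnected' {α : Type*} (M : Matroid α) : Prop :=
  M.E.Nonempty ∧ ∀ e ∈ M.E, ∀ f ∈ M.E, e ≠ f →
    ∃ C : Set α, M.IsCircuit' C ∧ e ∈ C ∧ f ∈ C

/-- The (ℕ-valued) rank of a set in a matroid: the maximal cardinality of an independent
subset. -/
noncomputable def Matroid.rk' {α : Type*} (M : Matroid α) (A : Set α) : ℕ :=
  sSup {n : ℕ | ∃ I : Set α, I ⊆ A ∧ M.Indep I ∧ I.ncard = n}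

/-- The Tutte polynomial of a matroid with finite ground set, as an element of `ℤ[x,y]`
(with `x = X 0`, `y = X 1`):
`T_M(x,y) = Σ_{A ⊆ E} (x−1)^{rk E − rk A} (y−1)^{|A| − rk A}`. -/
noncomputable def Matroid.tutte {α : Type*} (M : Matroid α) (hE : M.E.Finite) :
    MvPolynomial (Fin 2) ℤ :=
  ∑ A ∈ hE.toFinset.powerset,
    (MvPolynomial.X 0 - 1) ^ (M.rk' M.E - M.rk' ↑A) *
      (MvPolynomial.X 1 - 1) ^ (A.card - M.rk' ↑A)

open MvPolynomial Finset

namespace TutteAux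

variable {α : Type*}

lemma finsupp_fin2_ext {m : Fin 2 →₀ ℕ} (h0 : m 0 = 0) (h1 : m 1 = 0) : m = 0 := by
  ext i
  fin_cases i
  · exact h0
  · exact h1

lemma rk'_spec (M : Matroid α) (hE : M.E.Finite) (A : Set α) :
    (∃ I : Set α, I ⊆ A ∧ M.Indep I ∧ I.ncard = M.rk' A) ∧
      ∀ I : Set α, I ⊆ A → M.Indep I → I.ncard ≤ M.rk' A := by
  have hbdd : BddAbove {n : ℕ | ∃ I : Set α, I ⊆ A ∧ M.Indep I ∧ I.ncard = n} := by
    refine ⟨M.E.ncard, ?_⟩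
    rintro n ⟨I, hIA, hI, rfl⟩
    exact Set.ncard_le_ncard hI.subset_ground hE
  have hne : {n : ℕ | ∃ I : Set α, I ⊆ A ∧ M.Indep I ∧ I.ncard = n}.Nonempty :=
    ⟨0, ∅, Set.empty_subset _, M.empty_indep, by simp⟩
  exact ⟨Nat.sSup_mem hne hbdd, fun I hIA hI => le_csSup hbdd ⟨I, hIA, hI, rfl⟩⟩

lemma rk'_facts (M : Matroid α) (hE : M.E.Finite) {A : Set α} (hA : A ⊆ M.E) :
    M.rk' A ≤ M.rk' M.E ∧ M.rk' A ≤ A.ncard ∧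
      M.rk' M.E ≤ M.rk' A + (M.E \ A).ncard := by
  obtain ⟨⟨I, hIA, hI, hIc⟩, hub⟩ := rk'_spec M hE A
  obtain ⟨⟨J, hJE, hJ, hJc⟩, hubE⟩ := rk'_spec M hE M.E
  refine ⟨?_, ?_, ?_⟩
  · rw [← hIc]; exact hubE I (hIA.trans hA) hI
  · rw [← hIc]; exact Set.ncard_le_ncard hIA (hE.subset hA)
  · rw [← hJc]
    have hJfin : J.Finite := hE.subset hJ.subset_ground
    calc J.ncard ≤ (J ∩ A).ncard + (J \ A).ncard := by
          conv_lhs => rw [← Set.inter_union_diff J A]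
          exact Set.ncard_union_le _ _
      _ ≤ M.rk' A + (M.E \ A).ncard :=
          add_le_add (hub _ Set.inter_subset_right (hJ.subset Set.inter_subset_left))
            (Set.ncard_le_ncard (Set.diff_subset_diff_left hJE) (hE.subset Set.diff_subset))

end TutteAux


namespace TutteAux2

variable (R : Type*) [CommRing R] [IsDomain R]

noncomputable abbrev FF := FractionRing (Polynomial R)

noncomputable def xh : FF R := algebraMap (Polynomial R) (FF R) Polynomial.X

noncomputable def psi : MvPolynomial (Fin 2) R →+* FF R :=
  eval₂Hom ((algebraMap (Polynomial R) (FF R)).comp Polynomial.C)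
    ![xh R, xh R * (xh R - 1)⁻¹]

lemma X_sub_one_ne : (Polynomial.X - 1 : Polynomial R) ≠ 0 := by
  intro h
  have := congrArg (fun p => Polynomial.coeff p 1) h
  simp [Polynomial.coeff_one] at this

lemma w_ne : xh R - 1 ≠ 0 := by
  intro h
  apply X_sub_one_ne R
  apply IsFractionRing.injective (Polynomial R) (FF R)
  rw [map_sub, map_one, map_zero]
  exact h

lemma psi_X0 : psi R (X 0) = xh R := by simp [psi]

lemma psi_X1 : psi R (X 1) = xh R * (xh R - 1)⁻¹ := by simp [psi]

lemma psi_C (u : R) : psi R (C u) = algebraMap (Polynomial R) (FF R) (Polynomial.C u) := by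
  simp [psi]

noncomputable def axisPoly (P : MvPolynomial (Fin 2) R) (c : ℕ) : Polynomial R :=
  ∑ m ∈ P.support,
    Polynomial.C (P.coeff m) * Polynomial.X ^ (m 0 + m 1) * (Polynomial.X - 1) ^ (c - m 1)

lemma axisPoly_map (P : MvPolynomial (Fin 2) R) (c : ℕ) (hc : degreeOf 1 P ≤ c) :
    algebraMap (Polynomial R) (FF R) (axisPoly R P c) = psi R P * (xh R - 1) ^ c := by
  conv_rhs => rw [P.as_sum]
  rw [map_sum (psi R), Finset.sum_mul, axisPoly, map_sum]
  refine Finset.sum_congr rfl fun m hm => ?_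
  have hm1 : m 1 ≤ c := (monomial_le_degreeOf 1 hm).trans hc
  rw [show psi R = eval₂Hom ((algebraMap (Polynomial R) (FF R)).comp Polynomial.C)
    ![xh R, xh R * (xh R - 1)⁻¹] from rfl, eval₂Hom_monomial]
  rw [Finsupp.prod_pow, Fin.prod_univ_two]
  simp only [Matrix.cons_val_zero, Matrix.cons_val_one, Matrix.head_cons, RingHom.coe_comp,
    Function.comp_apply]
  generalize hb : m 1 = b at hm1 ⊢
  generalize m 0 = a
  rw [map_mul, map_mul, map_pow, map_pow, map_sub, map_one,
    show (algebraMap (Polynomial R) (FF R)) Polynomial.X = xh R from rfl]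
  rw [mul_pow, inv_pow, pow_sub₀ _ (w_ne R) hm1, pow_add]
  ring

lemma axisPoly_eval_zero (P : MvPolynomial (Fin 2) R) (c : ℕ) :
    (axisPoly R P c).eval 0 = (-1) ^ c * P.coeff 0 := by
  have hterm : ∀ m ∈ P.support, m ≠ 0 →
      Polynomial.eval 0 (Polynomial.C (P.coeff m) * Polynomial.X ^ (m 0 + m 1) *
        (Polynomial.X - 1) ^ (c - m 1)) = 0 := by
    intro m _ hm
    have h : m 0 + m 1 ≠ 0 := by
      intro h
      exact hm (TutteAux.finsupp_fin2_ext (by omega) (by omega))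
    simp [zero_pow h]
  rw [axisPoly, Polynomial.eval_finset_sum]
  by_cases h0 : (0 : Fin 2 →₀ ℕ) ∈ P.support
  · rw [Finset.sum_eq_single_of_mem _ h0 (fun m hm hne => hterm m hm hne)]
    simp [zero_sub]
    ring
  · rw [MvPolynomial.notMem_support_iff.mp h0, mul_zero]
    exact Finset.sum_eq_zero fun m hm => hterm m hm (fun h => h0 (h ▸ hm))

lemma axisPoly_natDegree_le (P : MvPolynomial (Fin 2) R) (c : ℕ) (hc : degreeOf 1 P ≤ c) :
    (axisPoly R P c).natDegree ≤ degreeOf 0 P + c := by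
  apply Polynomial.natDegree_sum_le_of_forall_le
  intro m hm
  have h0 : m 0 ≤ degreeOf 0 P := monomial_le_degreeOf 0 hm
  have h1 : m 1 ≤ c := (monomial_le_degreeOf 1 hm).trans hc
  refine le_trans Polynomial.natDegree_mul_le ?_
  refine le_trans (add_le_add Polynomial.natDegree_mul_le Polynomial.natDegree_pow_le) ?_
  have hX1 : (Polynomial.X - 1 : Polynomial R).natDegree = 1 := by
    rw [show (1 : Polynomial R) = Polynomial.C 1 from (Polynomial.C_1).symm]
    exact Polynomial.natDegree_X_sub_C 1
  simp only [Polynomial.natDegree_C, Polynomial.natDegree_X_pow, hX1, mul_one, zero_add]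
  omega

lemma degreeOf_mul_eq' (i : Fin 2) (P Q : MvPolynomial (Fin 2) R) (hP : P ≠ 0) (hQ : Q ≠ 0) :
    degreeOf i (P * Q) = degreeOf i P + degreeOf i Q := by
  have key : ∀ P Q : MvPolynomial (Fin 2) R, P ≠ 0 → Q ≠ 0 →
      degreeOf 0 (P * Q) = degreeOf 0 P + degreeOf 0 Q := by
    intro P Q hP hQ
    have hP' : finSuccEquiv R 1 P ≠ 0 := fun h => hP (by
      simpa using congrArg (finSuccEquiv R 1).symm h)
    have hQ' : finSuccEquiv R 1 Q ≠ 0 := fun h => hQ (by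
      simpa using congrArg (finSuccEquiv R 1).symm h)
    rw [← natDegree_finSuccEquiv, ← natDegree_finSuccEquiv, ← natDegree_finSuccEquiv, map_mul,
      Polynomial.natDegree_mul hP' hQ']
  have key1 : ∀ P Q : MvPolynomial (Fin 2) R, P ≠ 0 → Q ≠ 0 →
      degreeOf 1 (P * Q) = degreeOf 1 P + degreeOf 1 Q := by
    intro P Q hP hQ
    have hren : ∀ f : MvPolynomial (Fin 2) R,
        degreeOf 1 f = degreeOf 0 (rename (Equiv.swap (0 : Fin 2) 1) f) := by
      intro f
      have h := degreeOf_rename_of_injective (Equiv.swap (0 : Fin 2) 1).injective (p := f) 1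
      rw [Equiv.swap_apply_right] at h
      exact h.symm
    have hmul : rename (Equiv.swap (0 : Fin 2) 1) (P * Q) =
        rename (Equiv.swap (0 : Fin 2) 1) P * rename (Equiv.swap (0 : Fin 2) 1) Q := map_mul _ _ _
    have hinj := rename_injective (R := R) (σ := Fin 2)
      (Equiv.swap (0 : Fin 2) 1) (Equiv.swap (0 : Fin 2) 1).injective
    rw [hren, hren, hren, hmul]
    refine key _ _ ?_ ?_
    · intro h; exact hP (hinj (by simpa using h))
    · intro h; exact hQ (hinj (by simpa using h))
  fin_cases i
  · exact key P Q hP hQ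
  · exact key1 P Q hP hQ

lemma eq_C_of_degreeOf_zero (Q : MvPolynomial (Fin 2) R) (h0 : degreeOf 0 Q = 0)
    (h1 : degreeOf 1 Q = 0) : Q = MvPolynomial.C (Q.coeff 0) := by
  apply MvPolynomial.ext
  intro m
  rw [MvPolynomial.coeff_C]
  split_ifs with h
  · rw [← h]
  · by_contra hne
    have hm : m ∈ Q.support := MvPolynomial.mem_support_iff.mpr hne
    have hh0 := monomial_le_degreeOf 0 hm
    have hh1 := monomial_le_degreeOf 1 hm
    exact h (TutteAux.finsupp_fin2_ext (by omega) (by omega)).symm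

lemma degreeOf_X_sub_one_le (i j : Fin 2) :
    degreeOf i (X j - 1 : MvPolynomial (Fin 2) R) ≤ if i = j then 1 else 0 := by
  rw [sub_eq_add_neg]
  refine le_trans (degreeOf_add_le _ _ _) ?_
  rw [degreeOf_neg]
  have h1 : degreeOf i (1 : MvPolynomial (Fin 2) R) = 0 := by
    rw [← MvPolynomial.C_1]; exact degreeOf_C _ _
  simp [degreeOf_X, h1]

lemma degreeOf_term_le (i : Fin 2) (a b : ℕ) :
    degreeOf i ((X 0 - 1 : MvPolynomial (Fin 2) R) ^ a * (X 1 - 1) ^ b) ≤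
      if i = 0 then a else b := by
  refine le_trans (degreeOf_mul_le _ _ _) ?_
  have ha := le_trans (degreeOf_pow_le i (X 0 - 1 : MvPolynomial (Fin 2) R) a)
    (Nat.mul_le_mul_left a (degreeOf_X_sub_one_le R i 0))
  have hb := le_trans (degreeOf_pow_le i (X 1 - 1 : MvPolynomial (Fin 2) R) b)
    (Nat.mul_le_mul_left b (degreeOf_X_sub_one_le R i 1))
  fin_cases i <;> simp at ha hb ⊢ <;> omega

end TutteAux2

theorem tutte_irreducible_of_connected {α : Type*} (M : Matroid α) (hE : M.E.Finite)
    (hcard : 2 ≤ hE.toFinset.card) (hconn : M.IsConnected')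
    (R : Type*) [CommRing R] [IsDomain R] [UniqueFactorizationMonoid R]
    (ht : (Int.castRingHom R) ((M.tutte hE).coeff (Finsupp.single 0 1)) ≠ 0) :
    Irreducible (MvPolynomial.map (Int.castRingHom R) (M.tutte hE)) := by
  classical
  set n := hE.toFinset.card with hn
  set r := M.rk' M.E with hr
  set TR := MvPolynomial.map (Int.castRingHom R) (M.tutte hE) with hTRdef
  have hEcard : M.E.ncard = n := by rw [hn]; exact Set.ncard_eq_toFinset_card M.E hE
  have hAfacts : ∀ A ∈ hE.toFinset.powerset,
      M.rk' ↑A ≤ r ∧ M.rk' ↑A ≤ A.card ∧ r ≤ M.rk' ↑A + (n - A.card) ∧ A.card ≤ n := by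
    intro A hA
    rw [Finset.mem_powerset] at hA
    have hsub : (A : Set α) ⊆ M.E := fun x hx => (hE.mem_toFinset).mp (hA hx)
    obtain ⟨f1, f2, f3⟩ := TutteAux.rk'_facts M hE hsub
    have hcoe : (↑A : Set α).ncard = A.card := Set.ncard_coe_finset A
    have hAn : A.card ≤ n := Finset.card_le_card hA
    have hdiff : (M.E \ ↑A).ncard = n - A.card := by
      rw [Set.ncard_diff hsub A.finite_toSet, hcoe, hEcard]
    refine ⟨f1, by omega, by omega, hAn⟩
  have hrn : r ≤ n := by
    obtain ⟨-, f2, -⟩ := TutteAux.rk'_facts M hE (subset_refl M.E)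
    omega
  have hTR : TR = ∑ A ∈ hE.toFinset.powerset,
      (X 0 - 1 : MvPolynomial (Fin 2) R) ^ (r - M.rk' ↑A) * (X 1 - 1) ^ (A.card - M.rk' ↑A) := by
    rw [hTRdef, Matroid.tutte, map_sum]
    refine Finset.sum_congr rfl fun A _ => ?_
    simp only [map_mul, map_pow, map_sub, map_one, MvPolynomial.map_X]
    rfl
  have htR : TR.coeff (Finsupp.single 0 1) ≠ 0 := by
    rw [hTRdef, MvPolynomial.coeff_map]; exact ht
  have hTRne : TR ≠ 0 := fun h => htR (by rw [h]; simp)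
  have hc00 : MvPolynomial.constantCoeff TR = 0 := by
    rw [hTR, map_sum]
    have hterm : ∀ A ∈ hE.toFinset.powerset,
        MvPolynomial.constantCoeff ((X 0 - 1 : MvPolynomial (Fin 2) R) ^ (r - M.rk' ↑A) *
          (X 1 - 1) ^ (A.card - M.rk' ↑A)) = (-1 : R) ^ r * (-1) ^ A.card := by
      intro A hA
      obtain ⟨f1, f2, f3, f4⟩ := hAfacts A hA
      simp only [map_mul, map_pow, map_sub, map_one, MvPolynomial.constantCoeff_X]
      have e1 : r = (r - M.rk' ↑A) + M.rk' ↑A := by omega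
      have e2 : A.card = (A.card - M.rk' ↑A) + M.rk' ↑A := by omega
      have hsq : ((-1 : R) ^ M.rk' ↑A) * ((-1 : R) ^ M.rk' ↑A) = 1 := by
        rw [← pow_add, ← two_mul, pow_mul]; norm_num
      calc (0 - 1 : R) ^ (r - M.rk' ↑A) * (0 - 1 : R) ^ (A.card - M.rk' ↑A)
          = (-1 : R) ^ (r - M.rk' ↑A) * (-1 : R) ^ (A.card - M.rk' ↑A) := by norm_num
        _ = ((-1 : R) ^ (r - M.rk' ↑A) * (-1 : R) ^ (A.card - M.rk' ↑A)) *
            (((-1 : R) ^ M.rk' ↑A) * ((-1 : R) ^ M.rk' ↑A)) := by rw [hsq, mul_one]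
        _ = ((-1 : R) ^ ((r - M.rk' ↑A) + M.rk' ↑A)) *
            ((-1 : R) ^ ((A.card - M.rk' ↑A) + M.rk' ↑A)) := by
            rw [pow_add, pow_add]; ring
        _ = (-1 : R) ^ r * (-1 : R) ^ A.card := by rw [← e1, ← e2]
    rw [Finset.sum_congr rfl hterm, ← Finset.mul_sum]
    have hzero : ∑ A ∈ hE.toFinset.powerset, (-1 : R) ^ A.card = 0 := by
      have hne : hE.toFinset.Nonempty := by rw [← Finset.card_pos]; omega
      have h := Finset.sum_powerset_neg_one_pow_card_of_nonempty hne
      calc ∑ A ∈ hE.toFinset.powerset, (-1 : R) ^ A.card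
          = ((∑ A ∈ hE.toFinset.powerset, (-1 : ℤ) ^ A.card : ℤ) : R) := by push_cast; rfl
        _ = 0 := by rw [h]; simp
    rw [hzero, mul_zero]
  have hdegTR0 : degreeOf 0 TR ≤ r := by
    rw [hTR]
    refine le_trans (degreeOf_sum_le _ _ _) (Finset.sup_le fun A hA => ?_)
    obtain ⟨f1, -, -, -⟩ := hAfacts A hA
    have h := TutteAux2.degreeOf_term_le R 0 (r - M.rk' ↑A) (A.card - M.rk' ↑A)
    rw [if_pos rfl] at h
    exact le_trans h (by omega)
  have hdegTR1 : degreeOf 1 TR ≤ n - r := by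
    rw [hTR]
    refine le_trans (degreeOf_sum_le _ _ _) (Finset.sup_le fun A hA => ?_)
    obtain ⟨f1, f2, f3, f4⟩ := hAfacts A hA
    have h := TutteAux2.degreeOf_term_le R 1 (r - M.rk' ↑A) (A.card - M.rk' ↑A)
    rw [if_neg (by decide)] at h
    exact le_trans h (by omega)
  have hIden : TutteAux2.psi R TR * (TutteAux2.xh R - 1) ^ (n - r) = TutteAux2.xh R ^ n := by
    rw [hTR, map_sum, Finset.sum_mul]
    have hterm : ∀ A ∈ hE.toFinset.powerset,
        TutteAux2.psi R ((X 0 - 1 : MvPolynomial (Fin 2) R) ^ (r - M.rk' ↑A) *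
            (X 1 - 1) ^ (A.card - M.rk' ↑A)) * (TutteAux2.xh R - 1) ^ (n - r)
          = (TutteAux2.xh R - 1) ^ (n - A.card) := by
      intro A hA
      obtain ⟨f1, f2, f3, f4⟩ := hAfacts A hA
      simp only [map_mul, map_pow, map_sub, map_one, TutteAux2.psi_X0, TutteAux2.psi_X1]
      have hw := TutteAux2.w_ne R
      have hX1 : TutteAux2.xh R * (TutteAux2.xh R - 1)⁻¹ - 1 = (TutteAux2.xh R - 1)⁻¹ := by
        field_simp
        ring
      rw [hX1, inv_pow]
      have hkey : (r - M.rk' ↑A) + (n - r) = (n - A.card) + (A.card - M.rk' ↑A) := by omega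
      calc (TutteAux2.xh R - 1) ^ (r - M.rk' ↑A) *
            ((TutteAux2.xh R - 1) ^ (A.card - M.rk' ↑A))⁻¹ * (TutteAux2.xh R - 1) ^ (n - r)
          = (TutteAux2.xh R - 1) ^ ((r - M.rk' ↑A) + (n - r)) *
            ((TutteAux2.xh R - 1) ^ (A.card - M.rk' ↑A))⁻¹ := by rw [pow_add]; ring
        _ = (TutteAux2.xh R - 1) ^ ((n - A.card) + (A.card - M.rk' ↑A)) *
            ((TutteAux2.xh R - 1) ^ (A.card - M.rk' ↑A))⁻¹ := by rw [hkey]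
        _ = (TutteAux2.xh R - 1) ^ (n - A.card) := by
            rw [pow_add, mul_assoc, mul_inv_cancel₀ (pow_ne_zero _ hw), mul_one]
    rw [Finset.sum_congr rfl hterm]
    calc ∑ A ∈ hE.toFinset.powerset, (TutteAux2.xh R - 1) ^ (n - A.card)
        = ∑ A ∈ hE.toFinset.powerset, (∏ _i ∈ A, (1 : TutteAux2.FF R)) *
            ∏ _i ∈ hE.toFinset \ A, (TutteAux2.xh R - 1) := by
          refine Finset.sum_congr rfl fun A hA => ?_
          rw [Finset.prod_const_one, one_mul, Finset.prod_const,
            Finset.card_sdiff_of_subset (Finset.mem_powerset.mp hA)]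
      _ = ∏ _i ∈ hE.toFinset, ((1 : TutteAux2.FF R) + (TutteAux2.xh R - 1)) :=
          (Finset.prod_add _ _ _).symm
      _ = TutteAux2.xh R ^ n := by rw [Finset.prod_const]; congr 1; ring
  have key : ∀ P Q : MvPolynomial (Fin 2) R, TR = P * Q → P.coeff 0 = 0 → Q.coeff 0 ≠ 0 →
      IsUnit Q := by
    intro P Q hPQ hp0 hq0
    have hQne : Q ≠ 0 := fun h => hq0 (by rw [h]; simp)
    have hPne : P ≠ 0 := fun h => hTRne (by rw [hPQ, h, zero_mul])
    set c := degreeOf 1 P with hc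
    set d := degreeOf 1 Q with hd
    set a := degreeOf 0 P with ha
    set p₀ := TutteAux2.axisPoly R P c with hp₀
    set q₀ := TutteAux2.axisPoly R Q d with hq₀
    have hIdenR : p₀ * q₀ * (Polynomial.X - 1) ^ (n - r) =
        Polynomial.X ^ n * (Polynomial.X - 1) ^ (c + d) := by
      apply IsFractionRing.injective (Polynomial R) (TutteAux2.FF R)
      have h2 : TutteAux2.psi R P * TutteAux2.psi R Q = TutteAux2.psi R TR := by
        rw [← map_mul, ← hPQ]
      simp only [map_mul, map_pow, map_sub, map_one]
      rw [hp₀, hq₀, TutteAux2.axisPoly_map R P c hc.ge, TutteAux2.axisPoly_map R Q d hd.ge,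
        show (algebraMap (Polynomial R) (TutteAux2.FF R)) Polynomial.X = TutteAux2.xh R from rfl]
      linear_combination ((TutteAux2.xh R - 1) ^ c * (TutteAux2.xh R - 1) ^ d) * hIden +
        ((TutteAux2.xh R - 1) ^ (n - r) * (TutteAux2.xh R - 1) ^ c *
          (TutteAux2.xh R - 1) ^ d) * h2
    have hXsub : (Polynomial.X - 1 : Polynomial R) ≠ 0 := TutteAux2.X_sub_one_ne R
    have hRHSne : (Polynomial.X : Polynomial R) ^ n * (Polynomial.X - 1) ^ (c + d) ≠ 0 :=
      mul_ne_zero (pow_ne_zero _ Polynomial.X_ne_zero) (pow_ne_zero _ hXsub)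
    have hp₀ne : p₀ ≠ 0 := by
      intro h
      rw [h, zero_mul, zero_mul] at hIdenR
      exact hRHSne hIdenR.symm
    by_cases hconst : degreeOf 0 Q = 0 ∧ d = 0
    · have hQC : Q = MvPolynomial.C (Q.coeff 0) :=
        TutteAux2.eq_C_of_degreeOf_zero R Q hconst.1 hconst.2
      have hq₀C : q₀ = Polynomial.C (Q.coeff 0) := by
        apply IsFractionRing.injective (Polynomial R) (TutteAux2.FF R)
        rw [hq₀, TutteAux2.axisPoly_map R Q d hd.ge, hconst.2, pow_zero, mul_one]
        conv_lhs => rw [hQC]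
        rw [TutteAux2.psi_C]
      have hlc := congrArg Polynomial.leadingCoeff hIdenR
      have hXC : (Polynomial.X - 1 : Polynomial R) = Polynomial.X - Polynomial.C 1 := by
        rw [Polynomial.C_1]
      have hmon1 : ((Polynomial.X - 1 : Polynomial R) ^ (n - r)).leadingCoeff = 1 := by
        rw [hXC]; exact ((Polynomial.monic_X_sub_C (1 : R)).pow _).leadingCoeff
      have hmon2 : ((Polynomial.X - 1 : Polynomial R) ^ (c + d)).leadingCoeff = 1 := by
        rw [hXC]; exact ((Polynomial.monic_X_sub_C (1 : R)).pow _).leadingCoeff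
      rw [Polynomial.leadingCoeff_mul, Polynomial.leadingCoeff_mul, Polynomial.leadingCoeff_mul,
        hq₀C, Polynomial.leadingCoeff_C, hmon1, hmon2, Polynomial.leadingCoeff_X_pow] at hlc
      have hu : IsUnit (Q.coeff 0) := IsUnit.of_mul_eq_one (a := Q.coeff 0) p₀.leadingCoeff
        (by rw [mul_comm]; simpa using hlc)
      rw [hQC]
      exact hu.map (MvPolynomial.C : R →+* MvPolynomial (Fin 2) R)
    · exfalso
      have hadd0 : a + degreeOf 0 Q = degreeOf 0 TR := by
        rw [hPQ]; exact (TutteAux2.degreeOf_mul_eq' R 0 P Q hPne hQne).symm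
      have hadd1 : c + d = degreeOf 1 TR := by
        rw [hPQ]; exact (TutteAux2.degreeOf_mul_eq' R 1 P Q hPne hQne).symm
      have hq₀0 : q₀.eval 0 ≠ 0 := by
        rw [hq₀, TutteAux2.axisPoly_eval_zero]
        exact mul_ne_zero (pow_ne_zero _ (neg_ne_zero.mpr one_ne_zero)) hq0
      have hXdvd : (Polynomial.X : Polynomial R) ^ n ∣ p₀ := by
        have hprime : Prime (Polynomial.X : Polynomial R) := Polynomial.prime_X
        have hdvd : (Polynomial.X : Polynomial R) ^ n ∣ p₀ * (q₀ * (Polynomial.X - 1) ^ (n - r)) :=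
          ⟨(Polynomial.X - 1) ^ (c + d), by rw [← hIdenR]; ring⟩
        have hnd : ¬ (Polynomial.X : Polynomial R) ∣ q₀ * (Polynomial.X - 1) ^ (n - r) := by
          rw [Polynomial.X_dvd_iff, Polynomial.coeff_zero_eq_eval_zero, Polynomial.eval_mul]
          refine fun h => ?_
          have hne2 : ((Polynomial.X - 1 : Polynomial R) ^ (n - r)).eval 0 ≠ 0 := by
            rw [Polynomial.eval_pow]
            simp only [Polynomial.eval_sub, Polynomial.eval_X, Polynomial.eval_one, zero_sub]
            exact pow_ne_zero _ (neg_ne_zero.mpr one_ne_zero)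
          exact (mul_ne_zero hq₀0 hne2) h
        exact hprime.pow_dvd_of_dvd_mul_right n hnd hdvd
      have hdeg : n ≤ p₀.natDegree := by
        have h := Polynomial.natDegree_le_of_dvd hXdvd hp₀ne
        simpa using h
      have hdegle : p₀.natDegree ≤ a + c := by
        have h := TutteAux2.axisPoly_natDegree_le R P c hc.ge
        rw [← ha] at h
        exact h
      have h1 : a + degreeOf 0 Q = degreeOf 0 TR := hadd0
      have h2 : degreeOf 0 TR ≤ r := hdegTR0
      have h3 : degreeOf 1 TR ≤ n - r := hdegTR1
      rcases not_and_or.mp hconst with h4 | h4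
      · have h5 : 1 ≤ degreeOf 0 Q := Nat.one_le_iff_ne_zero.mpr h4
        omega
      · have h5 : 1 ≤ d := Nat.one_le_iff_ne_zero.mpr h4
        omega
  constructor
  · intro hu
    have h := hu.map (MvPolynomial.constantCoeff : MvPolynomial (Fin 2) R →+* R)
    rw [hc00] at h
    exact not_isUnit_zero h
  · intro P Q hPQ
    have hcc : ∀ f : MvPolynomial (Fin 2) R, MvPolynomial.constantCoeff f = f.coeff 0 := by
      intro f; rw [MvPolynomial.constantCoeff_eq]
    have h00 : P.coeff 0 * Q.coeff 0 = 0 := by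
      have h := congrArg MvPolynomial.constantCoeff hPQ
      rw [hc00, map_mul, hcc, hcc] at h
      exact h.symm
    have hboth : ¬(P.coeff 0 = 0 ∧ Q.coeff 0 = 0) := by
      rintro ⟨h1, h2⟩
      apply htR
      rw [hPQ, MvPolynomial.coeff_mul]
      refine Finset.sum_eq_zero fun x hx => ?_
      rw [Finset.HasAntidiagonal.mem_antidiagonal] at hx
      have e0 : x.1 0 + x.2 0 = 1 := by
        have h := congrArg (fun f => f 0) hx
        simpa using h
      have e1 : x.1 1 + x.2 1 = 0 := by
        have h := congrArg (fun f => f 1) hx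
        simpa [Finsupp.single_apply] using h
      rcases (by omega : x.1 0 = 0 ∨ x.2 0 = 0) with h | h
      · have hx1 : x.1 = 0 := TutteAux.finsupp_fin2_ext h (by omega)
        rw [hx1, h1, zero_mul]
      · have hx2 : x.2 = 0 := TutteAux.finsupp_fin2_ext h (by omega)
        rw [hx2, h2, mul_zero]
    rcases mul_eq_zero.mp h00 with h | h
    · have hq : Q.coeff 0 ≠ 0 := fun h2 => hboth ⟨h, h2⟩
      exact Or.inr (key P Q hPQ h hq)
    · have hp : P.coeff 0 ≠ 0 := fun h2 => hboth ⟨h2, h⟩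
      exact Or.inl (key Q P (by rw [hPQ, mul_comm]) h hp)
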